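/- Let (L,R) be a liftable pair of adjoint functors between braided monoidal categories C and D. Then there exists a functor L̲̄ : Bimon(D) ⥤ Bimon(C) commuting with the forgetful functors to monoid objects (i.e. U_Mon ∘ L̲̄ = L̄ ∘ U_Mon, where U_Mon denotes the forgetful functor from bimonoids to monoids), given on objects by L̲̄(H',Δ',ε') = (L̄H', ψ̄_{H',H'} ∘ L̄Δ', ψ̄₀ ∘ L̄ε'), where (ψ̄,ψ̄₀) is the oplax monoidal structure on L̄ induced by the adjunction L̄ ⊣ R̄; and there exists a functor R̲̄ : Bimon(C) ⥤ Bimon(D) commuting with the forgetful functors to comonoid objects (U_Comon ∘ R̲̄ = R̲ ∘ U_Comon), given on objects by R̲̄(H,m,u) = (R̲H, R̲m ∘ φ̲_{H,H}, R̲u ∘ φ̲₀), where (φ̲,φ̲₀) is the lax monoidal structure on R̲ induced by the adjunction L̲ ⊣ R̲. -/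

import Mathlib

open CategoryTheory Category MonoidalCategory Functor
open Functor.LaxMonoidal Functor.OplaxMonoidal

section InducedStructures

variable {𝒞 : Type*} [Category 𝒞] [MonoidalCategory 𝒞]
  {𝒟 : Type*} [Category 𝒟] [MonoidalCategory 𝒟]

/-- The cotensorator of the oplax monoidal structure induced on a left adjoint `L` of a lax
monoidal functor `R`: `ψ_{X,Y} = β_{LX⊗LY} ∘ L(φ_{LX,LY}) ∘ L(α_X ⊗ α_Y)`. -/
def inducedOplaxδ (L : 𝒟 ⥤ 𝒞) (R : 𝒞 ⥤ 𝒟) (adj : L ⊣ R) [R.LaxMonoidal] (X Y : 𝒟) :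
    L.obj (X ⊗ Y) ⟶ L.obj X ⊗ L.obj Y :=
  L.map (adj.unit.app X ⊗ₘ adj.unit.app Y) ≫
    L.map (μ R (L.obj X) (L.obj Y)) ≫ adj.counit.app (L.obj X ⊗ L.obj Y)

/-- The counit of the oplax monoidal structure induced on a left adjoint `L` of a lax
monoidal functor `R`: `ψ₀ = β_I ∘ L(φ₀)`. -/
def inducedOplaxη (L : 𝒟 ⥤ 𝒞) (R : 𝒞 ⥤ 𝒟) (adj : L ⊣ R) [R.LaxMonoidal] :
    L.obj (𝟙_ 𝒟) ⟶ 𝟙_ 𝒞 :=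
  L.map (ε R) ≫ adj.counit.app (𝟙_ 𝒞)

/-- The tensorator of the lax monoidal structure induced on a right adjoint `R` of an oplax
monoidal functor `L`: `φ_{X,Y} = R(β_X ⊗ β_Y) ∘ R(ψ_{RX,RY}) ∘ α_{RX⊗RY}`. -/
def inducedLaxμ (L : 𝒟 ⥤ 𝒞) (R : 𝒞 ⥤ 𝒟) (adj : L ⊣ R) [L.OplaxMonoidal] (X Y : 𝒞) :
    R.obj X ⊗ R.obj Y ⟶ R.obj (X ⊗ Y) :=
  adj.unit.app (R.obj X ⊗ R.obj Y) ≫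
    R.map (δ L (R.obj X) (R.obj Y)) ≫ R.map (adj.counit.app X ⊗ₘ adj.counit.app Y)

/-- The unit of the lax monoidal structure induced on a right adjoint `R` of an oplax
monoidal functor `L`: `φ₀ = R(ψ₀) ∘ α_J`. -/
def inducedLaxε (L : 𝒟 ⥤ 𝒞) (R : 𝒞 ⥤ 𝒟) (adj : L ⊣ R) [L.OplaxMonoidal] :
    𝟙_ 𝒟 ⟶ R.obj (𝟙_ 𝒞) :=
  adj.unit.app (𝟙_ 𝒟) ≫ R.map (η L)

end InducedStructures


section Aux

open Opposite

variable {C : Type*} [Category C] [MonoidalCategory C]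
  {D : Type*} [Category D] [MonoidalCategory D]

/-- The opposite of a lax monoidal functor is oplax monoidal. -/
def auxOpOplax (F : C ⥤ D) [F.LaxMonoidal] : F.op.OplaxMonoidal where
  η := (ε F).op
  δ X Y := (μ F X.unop Y.unop).op
  δ_natural_left f X' := Quiver.Hom.unop_inj (by simp)
  δ_natural_right X' f := Quiver.Hom.unop_inj (by simp)
  oplax_associativity X Y Z := Quiver.Hom.unop_inj (by
    simpa using (LaxMonoidal.associativity F X.unop Y.unop Z.unop).symm)
  oplax_left_unitality X := Quiver.Hom.unop_inj (by
    simpa using (LaxMonoidal.left_unitality F X.unop))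
  oplax_right_unitality X := Quiver.Hom.unop_inj (by
    simpa using (LaxMonoidal.right_unitality F X.unop))

/-- If the opposite of `F` is lax monoidal, `F` is oplax monoidal. -/
def auxUnopOplaxOfOpLax (F : C ⥤ D) [F.op.LaxMonoidal] : F.OplaxMonoidal where
  η := (ε F.op).unop
  δ X Y := (μ F.op (op X) (op Y)).unop
  δ_natural_left f X' := Quiver.Hom.op_inj (by
    simpa using LaxMonoidal.μ_natural_left F.op f.op (op X'))
  δ_natural_right X' f := Quiver.Hom.op_inj (by
    simpa using LaxMonoidal.μ_natural_right F.op (op X') f.op)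
  oplax_associativity X Y Z := Quiver.Hom.op_inj (by
    simpa using (LaxMonoidal.associativity_inv F.op (op X) (op Y) (op Z)).symm)
  oplax_left_unitality X := Quiver.Hom.op_inj (by
    simpa using (LaxMonoidal.left_unitality F.op (op X)))
  oplax_right_unitality X := Quiver.Hom.op_inj (by
    simpa using (LaxMonoidal.right_unitality F.op (op X)))

/-- The oplax monoidal structure induced on a left adjoint of a lax monoidal functor. -/
noncomputable def auxLeftAdjointOplax {F : C ⥤ D} {G : D ⥤ C} (adj : F ⊣ G) [G.LaxMonoidal] :
    F.OplaxMonoidal :=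
  adj.leftAdjointOplaxMonoidal

lemma auxLeftAdjointOplax_η {F : C ⥤ D} {G : D ⥤ C} (adj : F ⊣ G) [G.LaxMonoidal] :
    letI := auxLeftAdjointOplax adj
    η F = inducedOplaxη F G adj := by
  letI := auxLeftAdjointOplax adj
  rw [show η F = (adj.homEquiv _ _).symm (ε G) from rfl]
  simp [Adjunction.homEquiv_counit, inducedOplaxη]

lemma auxLeftAdjointOplax_δ {F : C ⥤ D} {G : D ⥤ C} (adj : F ⊣ G) [G.LaxMonoidal] (X Y : C) :
    letI := auxLeftAdjointOplax adj
    δ F X Y = inducedOplaxδ F G adj X Y := by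
  letI := auxLeftAdjointOplax adj
  rw [show δ F X Y = (adj.homEquiv _ _).symm ((adj.unit.app X ⊗ₘ adj.unit.app Y) ≫ μ G _ _)
    from rfl]
  simp [Adjunction.homEquiv_counit, inducedOplaxδ]

lemma auxRightAdjointLax_ε {F : C ⥤ D} {G : D ⥤ C} (adj : F ⊣ G) [F.OplaxMonoidal] :
    letI := adj.rightAdjointLaxMonoidal
    ε G = inducedLaxε F G adj := by
  letI := adj.rightAdjointLaxMonoidal
  rw [Adjunction.rightAdjointLaxMonoidal_ε, Adjunction.homEquiv_unit]
  rfl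

lemma auxRightAdjointLax_μ {F : C ⥤ D} {G : D ⥤ C} (adj : F ⊣ G) [F.OplaxMonoidal] (X Y : D) :
    letI := adj.rightAdjointLaxMonoidal
    μ G X Y = inducedLaxμ F G adj X Y := by
  letI := adj.rightAdjointLaxMonoidal
  rw [Adjunction.rightAdjointLaxMonoidal_μ, Adjunction.homEquiv_unit]
  simp [inducedLaxμ]

lemma auxComonObjEq {A B : Comon D} (hX : A.X = B.X)
    (h1 : HEq A.comon.counit B.comon.counit) (h2 : HEq A.comon.comul B.comon.comul) :
    A = B := by
  cases A
  cases B
  dsimp only at hX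
  subst hX
  rename_i iA iB
  cases iA
  cases iB
  dsimp only at h1 h2
  obtain rfl := eq_of_heq h1
  obtain rfl := eq_of_heq h2
  rfl

lemma auxComonHomEqToHom {A B : Comon D} (h : A = B) :
    (eqToHom h).hom = eqToHom (congrArg Comon.X h) := by subst h; rfl

end Aux

set_option maxHeartbeats 6000000 in
/-- for a liftable pair `(L,R)` of adjoint functors between braided monoidal
categories (`R` braided lax monoidal, `L` carrying the corresponding oplax structure, `R̄ ⊣`
having a left adjoint `L̄` on monoids and `L̲` having a right adjoint `R̲` on comonoids),
there is an induced functor `L̲̄` on bimonoids commuting with the forgetful functor to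
monoids and given by `L̲̄(H',Δ',ε') = (L̄H', ψ̄ ∘ L̄Δ', ψ̄₀ ∘ L̄ε')`, and an induced functor
`R̲̄` on bimonoids commuting with the forgetful functor to comonoids and given by
`R̲̄(H,m,u) = (R̲H, R̲m ∘ φ̲, R̲u ∘ φ̲₀)`. -/
theorem liftable_pair_induces_bimonoid_functors
    {C : Type*} [Category C] [MonoidalCategory C] [BraidedCategory C]
    {D : Type*} [Category D] [MonoidalCategory D] [BraidedCategory D]
    (L : D ⥤ C) (R : C ⥤ D) (adj : L ⊣ R)
    [R.LaxMonoidal] [L.OplaxMonoidal]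
    (hRbraided : ∀ X Y : C,
      μ R X Y ≫ R.map (β_ X Y).hom = (β_ (R.obj X) (R.obj Y)).hom ≫ μ R Y X)
    (hδ : ∀ X Y : D, δ L X Y = inducedOplaxδ L R adj X Y)
    (hη : η L = inducedOplaxη L R adj)
    -- liftability data
    (Lbar : Mon D ⥤ Mon C) (adjM : Lbar ⊣ R.mapMon)
    (Rlow : Comon C ⥤ Comon D) (adjC : L.mapComon ⊣ Rlow)
    -- the induced lax monoidal structure on `R̄ = R.mapMon`
    [(R.mapMon).LaxMonoidal]
    (hμM : ∀ A B : Mon C, (μ (R.mapMon) A B).hom = μ R A.X B.X)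
    (hεM : (ε (R.mapMon)).hom = ε R)
    -- the induced oplax monoidal structure on `L̲ = L.mapComon`
    [(L.mapComon).OplaxMonoidal]
    (hδC : ∀ A B : Comon D, (δ (L.mapComon) A B).hom = δ L A.X B.X)
    (hηC : (η (L.mapComon)).hom = η L) :
    (∃ (LBB : Bimon D ⥤ Bimon C)
        (hX : ∀ H' : Bimon D, (LBB.obj H').X = Lbar.obj H'.X),
      (LBB ⋙ Bimon.toMon C = Bimon.toMon D ⋙ Lbar) ∧
      (∀ H' : Bimon D, (LBB.obj H').comon.counit =
        eqToHom (hX H') ≫ Lbar.map H'.comon.counit ≫ inducedOplaxη Lbar R.mapMon adjM) ∧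
      (∀ H' : Bimon D, (LBB.obj H').comon.comul =
        eqToHom (hX H') ≫ Lbar.map H'.comon.comul ≫ inducedOplaxδ Lbar R.mapMon adjM H'.X H'.X ≫
          eqToHom (show Lbar.obj H'.X ⊗ Lbar.obj H'.X = (LBB.obj H').X ⊗ (LBB.obj H').X from by
            rw [hX H']))) ∧
    (∃ (RBB : Bimon C ⥤ Bimon D)
        (hX : ∀ H : Bimon C,
          (Bimon.toComon D).obj (RBB.obj H) = Rlow.obj ((Bimon.toComon C).obj H)),
      (RBB ⋙ Bimon.toComon D = Bimon.toComon C ⋙ Rlow) ∧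
      (∀ H : Bimon C, ((Bimon.toMonComon D).obj (RBB.obj H)).mon.one =
        inducedLaxε (L.mapComon) Rlow adjC ≫
          Rlow.map ((Bimon.toMonComon C).obj H).mon.one ≫
            eqToHom (show Rlow.obj ((Bimon.toComon C).obj H) =
                ((Bimon.toMonComon D).obj (RBB.obj H)).X from by
              rw [show ((Bimon.toMonComon D).obj (RBB.obj H)).X =
                  (Bimon.toComon D).obj (RBB.obj H) from rfl, hX H])) ∧
      (∀ H : Bimon C, ((Bimon.toMonComon D).obj (RBB.obj H)).mon.mul =
        eqToHom (show ((Bimon.toMonComon D).obj (RBB.obj H)).X ⊗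
              ((Bimon.toMonComon D).obj (RBB.obj H)).X =
            Rlow.obj ((Bimon.toComon C).obj H) ⊗ Rlow.obj ((Bimon.toComon C).obj H) from by
          rw [show ((Bimon.toMonComon D).obj (RBB.obj H)).X =
              (Bimon.toComon D).obj (RBB.obj H) from rfl, hX H]) ≫
          inducedLaxμ (L.mapComon) Rlow adjC
              ((Bimon.toComon C).obj H) ((Bimon.toComon C).obj H) ≫
            Rlow.map ((Bimon.toMonComon C).obj H).mon.mul ≫
              eqToHom (show Rlow.obj ((Bimon.toComon C).obj H) =
                  ((Bimon.toMonComon D).obj (RBB.obj H)).X from by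
                rw [show ((Bimon.toMonComon D).obj (RBB.obj H)).X =
                    (Bimon.toComon D).obj (RBB.obj H) from rfl, hX H]))) := by
  -- the two constructed instances
  letI instL : Lbar.OplaxMonoidal := auxLeftAdjointOplax adjM
  letI instR : Rlow.LaxMonoidal := adjC.rightAdjointLaxMonoidal
  have hLη : η Lbar = inducedOplaxη Lbar R.mapMon adjM := auxLeftAdjointOplax_η adjM
  have hLδ : ∀ X Y, δ Lbar X Y = inducedOplaxδ Lbar R.mapMon adjM X Y :=
    auxLeftAdjointOplax_δ adjM
  have hRε : ε Rlow = inducedLaxε L.mapComon Rlow adjC := auxRightAdjointLax_ε adjC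
  have hRμ : ∀ X Y, μ Rlow X Y = inducedLaxμ L.mapComon Rlow adjC X Y :=
    auxRightAdjointLax_μ adjC
  constructor
  · -- the functor on bimonoids induced by `Lbar`
    refine ⟨Lbar.mapComon, fun H' => rfl, ?_, ?_, ?_⟩
    · rfl
    · intro H'
      erw [eqToHom_refl, Category.id_comp]
      show Lbar.map H'.comon.counit ≫ η Lbar = _
      rw [hLη]
    · intro H'
      erw [eqToHom_refl, Category.comp_id, Category.id_comp]
      show Lbar.map H'.comon.comul ≫ δ Lbar _ _ = _
      rw [hLδ]
      rfl
  · -- the functor on bimonoids induced by `Rlow`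
    refine ⟨Bimon.toMonComon C ⋙ Rlow.mapMon ⋙ Bimon.ofMonComon D, ?_, ?_, ?_, ?_⟩
    · intro H
      exact auxComonObjEq rfl
        (heq_of_eq (Category.comp_id _))
        (heq_of_eq (Category.comp_id _))
    · have hobj : ∀ H : Bimon C,
          ((Bimon.toMonComon C ⋙ Rlow.mapMon ⋙ Bimon.ofMonComon D) ⋙
            Bimon.toComon D).obj H = (Bimon.toComon C ⋙ Rlow).obj H := fun H =>
        auxComonObjEq rfl
          (heq_of_eq (Category.comp_id _))
          (heq_of_eq (Category.comp_id _))
      refine CategoryTheory.Functor.ext hobj (fun X Y f => ?_)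
      apply Comon.Hom.ext
      simp only [Comon.comp_hom', auxComonHomEqToHom]
      erw [eqToHom_refl, eqToHom_refl, Category.comp_id, Category.id_comp]
      simp [auxComonHomEqToHom, Bimon.toComon, Functor.mapComon, Functor.mapMon]
      rfl
    · intro H
      apply Comon.Hom.ext
      have lhs1 : ((Bimon.toMonComon D).obj
          ((Bimon.toMonComon C ⋙ Rlow.mapMon ⋙ Bimon.ofMonComon D).obj H)).mon.one.hom =
          𝟙 _ ≫ ((ε Rlow).hom ≫ (Rlow.map ((Bimon.toMonComon C).obj H).mon.one).hom) := rfl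
      rw [lhs1, hRε]
      simp [auxComonHomEqToHom]
      erw [auxComonHomEqToHom, eqToHom_refl, Category.comp_id]
      rfl
    · intro H
      apply Comon.Hom.ext
      have lhs2 : ((Bimon.toMonComon D).obj
          ((Bimon.toMonComon C ⋙ Rlow.mapMon ⋙ Bimon.ofMonComon D).obj H)).mon.mul.hom =
          𝟙 _ ≫ ((μ Rlow ((Bimon.toComon C).obj H) ((Bimon.toComon C).obj H)).hom ≫
            (Rlow.map ((Bimon.toMonComon C).obj H).mon.mul).hom) := rfl
      rw [lhs2, hRμ]
      simp [auxComonHomEqToHom]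
      erw [auxComonHomEqToHom, eqToHom_refl, eqToHom_refl, Category.comp_id, Category.id_comp]
      rfl
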